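/- Let d ≥ 2 and 2 ≤ r ≤ d, and consider the d-dimensional torus T_n^d with vertex set [n]^d (coordinates in {1,…,n}, adjacency by differing by 1 mod n in exactly one coordinate). Let K(r) be the set of all (d−r+1)-element increasing tuples of indices from {1,…,d}, and for k ∈ K(r) let T(k) = {x ∈ [n]^d : x_j = 1 for all j ∈ k}, and D(r) = ⋃_{k∈K(r)} T(k). Then every vertex of D(r) has at least 2(r−1) neighbors inside D(r). -/

import Mathlib

/-- The `d`-dimensional torus `T_n^d`: vertices are `d`-tuples of elements of `ZMod n`
(representing coordinates `1, …, n` taken mod `n`), and two vertices are adjacent iff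
they differ by `±1 (mod n)` in exactly one coordinate. -/
def torus (n d : ℕ) : SimpleGraph (Fin d → ZMod n) :=
  SimpleGraph.fromRel fun x y =>
    ∃ i, (y i = x i + 1 ∨ y i = x i - 1) ∧ ∀ j, j ≠ i → y j = x j

/-- `D(r)`: the union over all `(d - r + 1)`-element subsets `k` of the coordinate indices
of the sub-tori `T(k) = {x : x_j = 1 for all j ∈ k}`. -/
def dynSet (n d r : ℕ) : Set (Fin d → ZMod n) :=
  {x | ∃ k : Finset (Fin d), k.card = d - r + 1 ∧ ∀ j ∈ k, x j = 1}

/-- For `d ≥ 2`, `2 ≤ r ≤ d` and `n ≥ 3`, every vertex of `D(r)` has at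
least `2(r - 1)` neighbors inside `D(r)` in the torus `T_n^d`. -/
theorem stmt_8 (n d r : ℕ) (hn : 3 ≤ n) (hd : 2 ≤ d) (hr2 : 2 ≤ r) (hrd : r ≤ d)
    (x : Fin d → ZMod n) (hx : x ∈ dynSet n d r) :
    2 * (r - 1) ≤ ((torus n d).neighborSet x ∩ dynSet n d r).ncard := by
  haveI : NeZero n := ⟨by omega⟩
  obtain ⟨k, hkcard, hk1⟩ := hx
  -- basic facts in ZMod n
  have h2 : ((2 : ℕ) : ZMod n) ≠ 0 := by
    rw [Ne, ZMod.natCast_eq_zero_iff]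
    intro h
    exact absurd (Nat.le_of_dvd (by norm_num) h) (by omega)
  have h1 : (1 : ZMod n) ≠ 0 := by
    rw [show (1 : ZMod n) = ((1 : ℕ) : ZMod n) by norm_cast, Ne,
      ZMod.natCast_eq_zero_iff]
    intro h
    exact absurd (Nat.le_of_dvd (by norm_num) h) (by omega)
  have hm1 : (-1 : ZMod n) ≠ 0 := fun h => h1 (by linear_combination -h)
  have h1m1 : (1 : ZMod n) ≠ -1 := by
    intro h
    apply h2
    push_cast
    linear_combination h
  -- the candidate neighbors
  set c : Bool → ZMod n := fun b => if b then 1 else -1 with hc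
  have hcne : ∀ b, c b ≠ 0 := by rintro (_|_) <;> simpa [hc]
  set f : Fin d × Bool → (Fin d → ZMod n) :=
    fun p => Function.update x p.1 (x p.1 + c p.2) with hf
  set S : Finset (Fin d → ZMod n) := (kᶜ ×ˢ (Finset.univ : Finset Bool)).image f with hS
  have hsub : ↑S ⊆ (torus n d).neighborSet x ∩ dynSet n d r := by
    intro y hy
    simp only [hS, Finset.coe_image, Set.mem_image, Finset.mem_coe,
      Finset.mem_product, Finset.mem_compl] at hy
    obtain ⟨⟨i, b⟩, ⟨hik, -⟩, rfl⟩ := hy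
    constructor
    · -- adjacency
      simp only [SimpleGraph.mem_neighborSet, torus, SimpleGraph.fromRel_adj]
      constructor
      · intro h
        have := congrFun h i
        simp only [hf, Function.update_self] at this
        exact hcne b (by linear_combination -this)
      · left
        refine ⟨i, ?_, fun j hj => Function.update_of_ne hj _ _⟩
        simp only [hf, Function.update_self]
        cases b <;> simp [hc, sub_eq_add_neg]
    · refine ⟨k, hkcard, fun j hj => ?_⟩
      have hji : j ≠ i := fun h => hik (h ▸ hj)
      simp only [hf, Function.update_of_ne hji]
      exact hk1 j hj
  have hinj : Set.InjOn f ↑(kᶜ ×ˢ (Finset.univ : Finset Bool)) := by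
    rintro ⟨i, b⟩ - ⟨i', b'⟩ - h
    have hi : i = i' := by
      by_contra hne
      have := congrFun h i
      simp only [hf, Function.update_self, Function.update_of_ne hne] at this
      exact hcne b (by linear_combination this)
    subst hi
    have := congrFun h i
    simp only [hf, Function.update_self, add_right_inj] at this
    have hb : b = b' := by
      cases b <;> cases b' <;> simp_all [hc]
    rw [hb]
  have hScard : S.card = 2 * (r - 1) := by
    rw [hS, Finset.card_image_of_injOn hinj, Finset.card_product,
      Finset.card_compl, hkcard]
    simp [Fintype.card_fin, Fintype.card_bool]
    omega
  calc 2 * (r - 1) = S.card := hScard.symm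
    _ = (↑S : Set (Fin d → ZMod n)).ncard := (Set.ncard_coe_finset S).symm
    _ ≤ _ := Set.ncard_le_ncard hsub (Set.toFinite _)
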